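/- The Donsker–Varadhan formula: D_KL(p‖q) = sup over bounded measurable φ of { E_p[φ] − log E_q[exp(φ)] }. -/

import Mathlib

open MeasureTheory Filter Topology

private lemma dv_clamp_abs_le {n t : ℝ} (hn : 0 ≤ n) : |max (-n) (min n t)| ≤ |t| := by
  rw [abs_le]
  constructor
  · rcases le_total n |t| with h | h
    · exact le_max_of_le_left (by linarith)
    · refine le_max_of_le_right (le_min (by linarith [abs_nonneg t]) (neg_abs_le t))
  · refine max_le (by linarith [abs_nonneg t]) (le_trans (min_le_right _ _) (le_abs_self t))

/-- Gibbs' inequality: each bounded measurable `φ` gives a lower bound on KL. -/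
private lemma dv_gibbs {Ω : Type*} [MeasurableSpace Ω] (p q : Measure Ω)
    [IsProbabilityMeasure p] [IsProbabilityMeasure q] (hpq : p ≪ q)
    (hKL : Integrable (fun x => Real.log ((p.rnDeriv q x).toReal)) p)
    (φ : Ω → ℝ) (hφ : Measurable φ) (M : ℝ) (hM : ∀ x, |φ x| ≤ M) :
    ∫ x, φ x ∂p - Real.log (∫ x, Real.exp (φ x) ∂q) ≤
      ∫ x, Real.log ((p.rnDeriv q x).toReal) ∂p := by
  set f : Ω → ℝ := fun x => Real.log ((p.rnDeriv q x).toReal) with hf_def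
  have hf : Measurable f := (Measure.measurable_rnDeriv p q).ennreal_toReal.log
  set h : Ω → ℝ := fun x => Real.exp (φ x - f x) with hh_def
  have hh : Measurable h := (hφ.sub hf).exp
  have hkey : ∀ x, (p.rnDeriv q x).toReal * h x ≤ Real.exp (φ x) := by
    intro x
    rcases eq_or_lt_of_le (ENNReal.toReal_nonneg : (0:ℝ) ≤ (p.rnDeriv q x).toReal) with h0 | h0
    · rw [← h0, zero_mul]; exact (Real.exp_pos _).le
    · have hfx : Real.exp (f x) = (p.rnDeriv q x).toReal := Real.exp_log h0
      have hx : h x = Real.exp (φ x) / (p.rnDeriv q x).toReal := by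
        show Real.exp (φ x - f x) = _
        rw [Real.exp_sub, hfx]
      rw [hx, mul_comm, div_mul_cancel₀ _ h0.ne']
  have hq_int_expφ : Integrable (fun x => Real.exp (φ x)) q := by
    refine Integrable.mono' (integrable_const (Real.exp M)) hφ.exp.aestronglyMeasurable ?_
    refine ae_of_all _ fun x => ?_
    rw [Real.norm_eq_abs, abs_of_pos (Real.exp_pos _)]
    exact Real.exp_le_exp.mpr ((le_abs_self _).trans (hM x))
  have hq_int_smul : Integrable (fun x => (p.rnDeriv q x).toReal • h x) q := by
    refine Integrable.mono' hq_int_expφ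
      (((Measure.measurable_rnDeriv p q).ennreal_toReal.mul hh).aestronglyMeasurable) ?_
    refine ae_of_all _ fun x => ?_
    rw [smul_eq_mul, Real.norm_eq_abs,
      abs_of_nonneg (mul_nonneg ENNReal.toReal_nonneg (Real.exp_pos _).le)]
    exact hkey x
  have hp_int_h : Integrable h p := (integrable_rnDeriv_smul_iff hpq).mp hq_int_smul
  have hI_le : ∫ x, h x ∂p ≤ ∫ x, Real.exp (φ x) ∂q := by
    rw [← integral_rnDeriv_smul hpq]
    exact integral_mono hq_int_smul hq_int_expφ fun x => hkey x
  set I := ∫ x, h x ∂p with hI_def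
  have hI_pos : 0 < I := integral_exp_pos hp_int_h
  have hp_int_φ : Integrable φ p := by
    refine Integrable.mono' (integrable_const M) hφ.aestronglyMeasurable ?_
    exact ae_of_all _ fun x => by rw [Real.norm_eq_abs]; exact hM x
  have hp_int_sub : Integrable (fun x => φ x - f x) p := hp_int_φ.sub hKL
  have hJensen : ∫ x, (φ x - f x) ∂p ≤ Real.log I := by
    have hsub1 : Integrable (fun x => h x / I - 1) p :=
      (hp_int_h.div_const I).sub (integrable_const 1)
    have hrhs_int : Integrable (fun x => Real.log I + (h x / I - 1)) p :=
      (integrable_const _).add hsub1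
    have hptwise : ∀ x, φ x - f x ≤ Real.log I + (h x / I - 1) := by
      intro x
      have h1 := Real.add_one_le_exp (φ x - f x - Real.log I)
      rw [Real.exp_sub, Real.exp_log hI_pos] at h1
      have : Real.exp (φ x - f x) = h x := rfl
      rw [this] at h1
      linarith
    calc ∫ x, (φ x - f x) ∂p ≤ ∫ x, (Real.log I + (h x / I - 1)) ∂p :=
          integral_mono hp_int_sub hrhs_int hptwise
      _ = Real.log I := by
          rw [integral_add (integrable_const _) hsub1,
            integral_sub (hp_int_h.div_const I) (integrable_const 1), integral_div,
            integral_const, integral_const]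
          simp [div_self hI_pos.ne']
          rw [← hI_def, div_self hI_pos.ne', sub_self]
  have hsub : ∫ x, φ x ∂p - ∫ x, f x ∂p ≤ Real.log I := by
    rwa [integral_sub hp_int_φ hKL] at hJensen
  have hlog : Real.log I ≤ Real.log (∫ x, Real.exp (φ x) ∂q) := Real.log_le_log hI_pos hI_le
  linarith

/-- Donsker–Varadhan variational formula for the Kullback–Leibler divergence:
`D_KL(p‖q) = sup_{φ bounded measurable} { E_p[φ] − log E_q[exp φ] }`. -/
theorem donsker_varadhan {Ω : Type*} [MeasurableSpace Ω] (p q : Measure Ω)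
    [IsProbabilityMeasure p] [IsProbabilityMeasure q] (hpq : p ≪ q)
    (hKL : Integrable (fun x => Real.log ((p.rnDeriv q x).toReal)) p) :
    ∫ x, Real.log ((p.rnDeriv q x).toReal) ∂p =
      ⨆ φ : {φ : Ω → ℝ // Measurable φ ∧ ∃ M, ∀ x, |φ x| ≤ M},
        (∫ x, φ.1 x ∂p - Real.log (∫ x, Real.exp (φ.1 x) ∂q)) := by
  set f : Ω → ℝ := fun x => Real.log ((p.rnDeriv q x).toReal) with hf_def
  have hf : Measurable f := (Measure.measurable_rnDeriv p q).ennreal_toReal.log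
  haveI hne : Nonempty {φ : Ω → ℝ // Measurable φ ∧ ∃ M, ∀ x, |φ x| ≤ M} :=
    ⟨⟨fun _ => 0, measurable_const, 0, fun x => by simp⟩⟩
  have hbdd : BddAbove (Set.range fun φ : {φ : Ω → ℝ // Measurable φ ∧ ∃ M, ∀ x, |φ x| ≤ M} =>
      ∫ x, φ.1 x ∂p - Real.log (∫ x, Real.exp (φ.1 x) ∂q)) := by
    refine ⟨∫ x, f x ∂p, ?_⟩
    rintro y ⟨⟨φ, hφm, M, hM⟩, rfl⟩
    exact dv_gibbs p q hpq hKL φ hφm M hM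
  refine le_antisymm ?_ (ciSup_le fun ⟨φ, hφm, M, hM⟩ => dv_gibbs p q hpq hKL φ hφm M hM)
  -- truncations of `f`
  set φn : ℕ → Ω → ℝ := fun n x =>
    if p.rnDeriv q x = 0 then -(n:ℝ) else max (-(n:ℝ)) (min (n:ℝ) (f x)) with hφn_def
  have hmeas0 : MeasurableSet {x | p.rnDeriv q x = 0} :=
    Measure.measurable_rnDeriv p q (measurableSet_singleton 0)
  have hφn_meas : ∀ n, Measurable (φn n) := fun n =>
    Measurable.ite hmeas0 measurable_const (measurable_const.max (measurable_const.min hf))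
  have hφn_bd : ∀ n x, |φn n x| ≤ (n:ℝ) := by
    intro n x
    rw [hφn_def]
    by_cases h0 : p.rnDeriv q x = 0
    · simp [h0]
    · simp only [h0, if_false]
      rw [abs_le]
      constructor
      · exact le_max_left _ _
      · exact max_le (neg_nonpos.mpr (Nat.cast_nonneg n) |>.trans (Nat.cast_nonneg n)) (min_le_left _ _)
  have hle : ∀ n, (∫ x, φn n x ∂p - Real.log (∫ x, Real.exp (φn n x) ∂q)) ≤
      ⨆ φ : {φ : Ω → ℝ // Measurable φ ∧ ∃ M, ∀ x, |φ x| ≤ M},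
        (∫ x, φ.1 x ∂p - Real.log (∫ x, Real.exp (φ.1 x) ∂q)) := fun n =>
    le_ciSup hbdd (⟨φn n, hφn_meas n, (n:ℝ), hφn_bd n⟩ :
      {φ : Ω → ℝ // Measurable φ ∧ ∃ M, ∀ x, |φ x| ≤ M})
  -- convergence of the numerator integrals
  have h1 : Tendsto (fun n => ∫ x, φn n x ∂p) atTop (𝓝 (∫ x, f x ∂p)) := by
    refine tendsto_integral_of_dominated_convergence (fun x => |f x|)
      (fun n => (hφn_meas n).aestronglyMeasurable) hKL.abs ?_ ?_
    · intro n
      filter_upwards [Measure.rnDeriv_pos hpq] with x hx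
      rw [Real.norm_eq_abs, hφn_def]
      simp only [hx.ne', if_false]
      exact dv_clamp_abs_le (Nat.cast_nonneg n)
    · filter_upwards [Measure.rnDeriv_pos hpq] with x hx
      obtain ⟨N, hN⟩ := exists_nat_ge (|f x|)
      refine tendsto_atTop_of_eventually_const (i₀ := N) fun n hn => ?_
      have hn' : |f x| ≤ (n:ℝ) := hN.trans (Nat.cast_le.mpr hn)
      rw [hφn_def]
      simp only [hx.ne', if_false]
      rw [min_eq_right ((le_abs_self _).trans hn'), max_eq_right (by
        have := neg_abs_le (f x); linarith)]
  -- convergence of the denominator integrals to 1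
  have h2 : Tendsto (fun n => ∫ x, Real.exp (φn n x) ∂q) atTop (𝓝 1) := by
    set G : Ω → ℝ := fun x => if p.rnDeriv q x = 0 then 0 else Real.exp (f x) with hG_def
    have hGint : ∫ x, G x ∂q = 1 := by
      have : ∫ x, G x ∂q = ∫ x, (p.rnDeriv q x).toReal ∂q := by
        refine integral_congr_ae ?_
        filter_upwards [Measure.rnDeriv_lt_top p q] with x hx
        rw [hG_def]
        by_cases h0 : p.rnDeriv q x = 0
        · simp [h0]
        · have hpos : 0 < (p.rnDeriv q x).toReal :=
            ENNReal.toReal_pos h0 hx.ne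
          simp only [h0, if_false, hf_def]
          rw [Real.exp_log hpos]
      rw [this, Measure.integral_toReal_rnDeriv hpq]
      simp
    rw [← hGint]
    refine tendsto_integral_of_dominated_convergence
      (fun x => 1 + (p.rnDeriv q x).toReal)
      (fun n => ((hφn_meas n).exp).aestronglyMeasurable)
      ((integrable_const 1).add (Measure.integrable_toReal_rnDeriv))
      ?_ ?_
    · intro n
      refine ae_of_all _ fun x => ?_
      rw [Real.norm_eq_abs, abs_of_pos (Real.exp_pos _), hφn_def]
      by_cases h0 : p.rnDeriv q x = 0
      · simp only [h0, if_true, ENNReal.toReal_zero]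
        have : Real.exp (-(n:ℝ)) ≤ 1 := by
          rw [← Real.exp_zero]
          exact Real.exp_le_exp.mpr (neg_nonpos.mpr (Nat.cast_nonneg n))
        have h2 : (0:ℝ) ≤ (p.rnDeriv q x).toReal := ENNReal.toReal_nonneg
        linarith
      · simp only [h0, if_false]
        have hle1 : max (-(n:ℝ)) (min (n:ℝ) (f x)) ≤ max 0 (f x) :=
          max_le_max (neg_nonpos.mpr (Nat.cast_nonneg n)) (min_le_right _ _)
        have h3 : Real.exp (max 0 (f x)) ≤ 1 + (p.rnDeriv q x).toReal := by
          have htR : (0:ℝ) ≤ (p.rnDeriv q x).toReal := ENNReal.toReal_nonneg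
          rcases le_total (f x) 0 with hfx | hfx
          · rw [max_eq_left hfx, Real.exp_zero]; linarith
          · rw [max_eq_right hfx]
            rcases eq_or_lt_of_le htR with ht0 | ht0
            · have : f x = 0 := by rw [hf_def]; simp [← ht0]
              rw [this, Real.exp_zero]; linarith
            · have : Real.exp (f x) = (p.rnDeriv q x).toReal := by
                show Real.exp (Real.log ((p.rnDeriv q x).toReal)) = _
                exact Real.exp_log ht0
              rw [this]; linarith
        exact (Real.exp_le_exp.mpr hle1).trans h3
    · refine ae_of_all _ fun x => ?_
      rw [hG_def, hφn_def]
      by_cases h0 : p.rnDeriv q x = 0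
      · simp only [h0, if_true]
        have : Tendsto (fun n : ℕ => Real.exp (-(n:ℝ))) atTop (𝓝 0) :=
          Real.tendsto_exp_atBot.comp
            (tendsto_neg_atTop_atBot.comp tendsto_natCast_atTop_atTop)
        exact this
      · simp only [h0, if_false]
        obtain ⟨N, hN⟩ := exists_nat_ge (|f x|)
        refine tendsto_atTop_of_eventually_const (i₀ := N) fun n hn => ?_
        have hn' : |f x| ≤ (n:ℝ) := hN.trans (Nat.cast_le.mpr hn)
        rw [min_eq_right ((le_abs_self _).trans hn'), max_eq_right (by
          have := neg_abs_le (f x); linarith)]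
  have h3 : Tendsto (fun n => Real.log (∫ x, Real.exp (φn n x) ∂q)) atTop (𝓝 0) := by
    have := (Real.continuousAt_log one_ne_zero).tendsto.comp h2
    simpa [Function.comp_def] using this
  have h4 : Tendsto (fun n => ∫ x, φn n x ∂p - Real.log (∫ x, Real.exp (φn n x) ∂q)) atTop
      (𝓝 (∫ x, f x ∂p)) := by
    have := h1.sub h3
    simpa using this
  exact le_of_tendsto h4 (Eventually.of_forall hle)
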